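/- (Russo–Van Roy information-theoretic regret bound, stated via the posterior-martingale form.) Let (Ω,𝔉,P) be a probability space with a filtration (𝔉_t)_{t=1}^{n+1}, let A* : Ω → [k] be measurable, and for each t let P*_t be the Δ^{k−1}-valued random vector with coordinates P*_{t,a} = P(A* = a | 𝔉_t). Let F be the unnormalised negentropy F(p) = ∑_{a=1}^k (p_a log p_a − p_a) (with 0 log 0 = 0), whose Bregman divergence on probability vectors is the relative entropy D_F(p,q) = ∑_{a=1}^k p_a log(p_a/q_a); the conditional expectation E[D_F(P*_{t+1},P*_t) | 𝔉_t] equals the conditional mutual information gained about A* in round t. Let Δ_1,…,Δ_n be integrable real random variables and β ≥ 0 a constant such that for every t ∈ {1,…,n}, E[Δ_t | 𝔉_t] ≤ sqrt(β · E[D_F(P*_{t+1},P*_t) | 𝔉_t]) almost surely. Then E[∑_{t=1}^n Δ_t] ≤ sqrt(n β log k). -/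

import Mathlib

open MeasureTheory
open scoped BigOperators

noncomputable section

/-- The relative entropy between two probability vectors, which is the Bregman
divergence of the unnormalised negentropy `F(p) = ∑ₐ (pₐ log pₐ − pₐ)` on probability
vectors (with the convention `0 log 0 = 0`). -/
def klDiv {k : ℕ} (p q : Fin k → ℝ) : ℝ :=
  ∑ a : Fin k, p a * Real.log (p a / q a)

/-- The posterior distribution of `A*` given a `σ`-algebra: the vector of conditional
probabilities `P(A* = a | m')`. -/
def posterior {Ω : Type*} {mΩ : MeasurableSpace Ω} (P : Measure Ω) {k : ℕ}
    (Astar : Ω → Fin k) (m' : MeasurableSpace Ω) : Ω → Fin k → ℝ :=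
  fun ω a => (P[fun ω' => if Astar ω' = a then (1 : ℝ) else 0 | m']) ω



lemma gibbs_aux {k : ℕ} (p q : Fin k → ℝ) (hp : ∀ a, 0 ≤ p a) (hq : ∀ a, 0 ≤ q a)
    (hpq : ∀ a, q a = 0 → p a = 0) (hps : ∑ a, p a = 1) (hqs : ∑ a, q a ≤ 1) :
    0 ≤ klDiv p q := by
  have key : ∀ a, p a - q a * (if p a = 0 then 0 else 1) ≤ p a * Real.log (p a / q a) := by
    intro a
    by_cases h : p a = 0
    · simp [h]
    · have hp' : 0 < p a := lt_of_le_of_ne (hp a) (Ne.symm h)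
      have hq' : 0 < q a := lt_of_le_of_ne (hq a) fun e => h (hpq a e.symm)
      have hlog : Real.log (q a / p a) ≤ q a / p a - 1 :=
        Real.log_le_sub_one_of_pos (div_pos hq' hp')
      have hinv : Real.log (p a / q a) = - Real.log (q a / p a) := by
        rw [← Real.log_inv]
        congr 1
        field_simp
      rw [hinv, if_neg h]
      have h2 : p a * (q a / p a) = q a := by field_simp
      nlinarith [mul_le_mul_of_nonneg_left hlog (le_of_lt hp')]
  have h1 : ∑ a, (p a - q a * (if p a = 0 then 0 else 1)) ≤ klDiv p q :=
    Finset.sum_le_sum fun a _ => key a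
  have h2 : ∑ a, q a * (if p a = 0 then 0 else 1) ≤ ∑ a, q a := by
    apply Finset.sum_le_sum
    intro a _
    by_cases h : p a = 0 <;> simp [h, hq a]
  rw [Finset.sum_sub_distrib, hps] at h1
  linarith

lemma entropy_ge {k : ℕ} (hk : 1 ≤ k) (p : Fin k → ℝ) (hp : ∀ a, 0 ≤ p a)
    (hps : ∑ a, p a = 1) : -Real.log k ≤ ∑ a, p a * Real.log (p a) := by
  have hk0 : (0:ℝ) < k := by exact_mod_cast hk
  have h := gibbs_aux p (fun _ => (k:ℝ)⁻¹) hp (fun _ => by positivity)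
    (fun a ha => absurd ha (by positivity)) hps
    (by simp [Finset.sum_const, Finset.card_univ]; rw [mul_inv_cancel₀ (ne_of_gt hk0)])
  have heq : klDiv p (fun _ => (k:ℝ)⁻¹) = ∑ a, (p a * Real.log (p a) + p a * Real.log k) := by
    unfold klDiv
    apply Finset.sum_congr rfl
    intro a _
    by_cases h0 : p a = 0
    · simp [h0]
    · rw [Real.log_div h0 (by positivity), Real.log_inv]
      ring
  rw [heq, Finset.sum_add_distrib, ← Finset.sum_mul, hps] at h
  linarith

lemma entropy_le {k : ℕ} (p : Fin k → ℝ) (hp : ∀ a, 0 ≤ p a) (hp1 : ∀ a, p a ≤ 1) :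
    ∑ a, p a * Real.log (p a) ≤ 0 := by
  apply Finset.sum_nonpos
  intro a _
  exact mul_nonpos_of_nonneg_of_nonpos (hp a) (Real.log_nonpos (hp a) (hp1 a))


lemma sqrt_le_div_add {x γ : ℝ} (hx : 0 ≤ x) (hγ : 0 < γ) :
    Real.sqrt x ≤ x / (2 * γ) + γ / 2 := by
  have h1 := Real.sq_sqrt hx
  have h2 := Real.sqrt_nonneg x
  rw [div_add_div _ _ (by positivity) (by norm_num), le_div_iff₀ (by positivity)]
  nlinarith [sq_nonneg (Real.sqrt x - γ)]

lemma arith_final {n : ℕ} (hn : 0 < n) {c X : ℝ} (hc : 0 ≤ c)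
    (h : ∀ γ : ℝ, 0 < γ → X ≤ c / (2 * γ) + n * γ / 2) : X ≤ Real.sqrt (n * c) := by
  have hn' : (0:ℝ) < n := by exact_mod_cast hn
  rcases eq_or_lt_of_le hc with h0 | h0
  · have hX : X ≤ 0 := by
      by_contra hX
      push_neg at hX
      have := h (X / n) (by positivity)
      rw [← h0] at this
      have hxx : (n:ℝ) * (X / n) = X := by field_simp
      rw [hxx, zero_div] at this
      linarith
    exact hX.trans (Real.sqrt_nonneg _)
  · set s := Real.sqrt (n * c) with hs
    have hs0 : 0 < s := Real.sqrt_pos.mpr (by positivity)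
    have hs2 : s ^ 2 = n * c := Real.sq_sqrt (by positivity)
    have := h (s / n) (by positivity)
    have heq : c / (2 * (s / n)) + n * (s / n) / 2 = s := by
      field_simp
      nlinarith
    linarith [heq ▸ this]


lemma xlogx_abs_le {x : ℝ} (h0 : 0 ≤ x) (h1 : x ≤ 1) : |x * Real.log x| ≤ 1 := by
  rcases eq_or_lt_of_le h0 with h | h
  · simp [← h]
  · have hl : Real.log x ≤ 0 := Real.log_nonpos h0 h1
    rw [abs_of_nonpos (mul_nonpos_of_nonneg_of_nonpos h0 hl), neg_le]
    have : Real.log x⁻¹ ≤ x⁻¹ - 1 := Real.log_le_sub_one_of_pos (by positivity)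
    rw [Real.log_inv] at this
    have hx : x * x⁻¹ = 1 := mul_inv_cancel₀ (ne_of_gt h)
    nlinarith

lemma setint_of_zero {Ω : Type*} {mΩ : MeasurableSpace Ω} (P : Measure Ω) (u : Ω → ℝ)
    (S : Set Ω) (hS : MeasurableSet S) (h : ∀ ω ∈ S, u ω = 0) : ∫ ω in S, u ω ∂P = 0 := by
  rw [setIntegral_congr_fun hS (g := fun _ => (0:ℝ)) h]
  simp

lemma ae_zero_on_of_setint_zero {Ω : Type*} {mΩ : MeasurableSpace Ω} (P : Measure Ω)
    (f : Ω → ℝ) (S : Set Ω) (hS : MeasurableSet S) (h0 : ∀ᵐ ω ∂P, 0 ≤ f ω)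
    (hi : Integrable f P) (hz : ∫ ω in S, f ω ∂P = 0) : ∀ᵐ ω ∂P, ω ∈ S → f ω = 0 := by
  have hzero : f =ᵐ[P.restrict S] 0 := by
    rw [← setIntegral_eq_zero_iff_of_nonneg_ae (ae_restrict_of_ae h0) hi.integrableOn]
    exact hz
  exact ae_imp_of_ae_restrict hzero

section
variable {Ω : Type*} {mΩ : MeasurableSpace Ω} {P : Measure Ω} [IsProbabilityMeasure P]
  {k : ℕ} {Astar : Ω → Fin k}

lemma ind_meas (hA : Measurable Astar) (a : Fin k) :
    Measurable (fun ω' => if Astar ω' = a then (1 : ℝ) else 0) :=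
  Measurable.ite (hA (measurableSet_singleton a)) measurable_const measurable_const

lemma ind_int (hA : Measurable Astar) (a : Fin k) :
    Integrable (fun ω' => if Astar ω' = a then (1 : ℝ) else 0) P := by
  apply Integrable.mono' (integrable_const (1:ℝ)) (ind_meas hA a).aestronglyMeasurable
  filter_upwards with ω
  by_cases h : Astar ω = a <;> simp [h]

lemma posterior_nonneg (hA : Measurable Astar) (m' : MeasurableSpace Ω) (a : Fin k) :
    ∀ᵐ ω ∂P, 0 ≤ posterior P Astar m' ω a :=
  condExp_nonneg (Filter.Eventually.of_forall fun ω => by positivity)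

lemma posterior_le_one (hA : Measurable Astar) {m' : MeasurableSpace Ω} (hm : m' ≤ mΩ)
    (a : Fin k) : ∀ᵐ ω ∂P, posterior P Astar m' ω a ≤ 1 := by
  have h := condExp_mono (μ := P) (m := m') (ind_int hA a) (integrable_const (1:ℝ))
    (Filter.Eventually.of_forall fun ω => by by_cases h : Astar ω = a <;> simp [h])
  filter_upwards [h] with ω hω
  calc posterior P Astar m' ω a ≤ (P[fun _ => (1:ℝ)|m']) ω := hω
  _ = 1 := by rw [condExp_const hm]

lemma posterior_sum_one (hk : 1 ≤ k) (hA : Measurable Astar) {m' : MeasurableSpace Ω}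
    (hm : m' ≤ mΩ) : ∀ᵐ ω ∂P, ∑ a, posterior P Astar m' ω a = 1 := by
  have h := condExp_finset_sum (μ := P) (m := m') (s := Finset.univ)
    (f := fun a ω' => if Astar ω' = a then (1:ℝ) else 0) (fun a _ => ind_int hA a)
  have heq : (∑ a : Fin k, fun ω' => if Astar ω' = a then (1:ℝ) else 0) = fun _ => (1:ℝ) := by
    funext ω'
    rw [Finset.sum_apply]
    simp
  rw [heq, condExp_const hm] at h
  filter_upwards [h.symm] with ω hω
  simpa [posterior] using hω

lemma posterior_absCont (hA : Measurable Astar) {m₁ m₂ : MeasurableSpace Ω}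
    (h12 : m₁ ≤ m₂) (hm : m₂ ≤ mΩ) (a : Fin k) :
    ∀ᵐ ω ∂P, posterior P Astar m₁ ω a = 0 → posterior P Astar m₂ ω a = 0 := by
  set u := fun ω => posterior P Astar m₁ ω a with hu
  set f := fun ω => posterior P Astar m₂ ω a with hf
  have hu_meas : StronglyMeasurable[m₁] u := stronglyMeasurable_condExp
  set S := u ⁻¹' {0} with hS
  have hS1 : MeasurableSet[m₁] S := hu_meas.measurable (measurableSet_singleton 0)
  have hS2 : MeasurableSet[m₂] S := h12 _ hS1
  have hSm : MeasurableSet[mΩ] S := hm _ hS2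
  have hint1 : ∫ ω in S, f ω ∂P = ∫ ω in S, (if Astar ω = a then (1:ℝ) else 0) ∂P :=
    setIntegral_condExp (m := m₂) hm (ind_int hA a) hS2
  have hint2 : ∫ ω in S, (if Astar ω = a then (1:ℝ) else 0) ∂P = ∫ ω in S, u ω ∂P :=
    (setIntegral_condExp (m := m₁) (h12.trans hm) (ind_int hA a) hS1).symm
  have hint3 : ∫ ω in S, u ω ∂P = 0 := setint_of_zero P u S hSm fun x hx => hx
  have := ae_zero_on_of_setint_zero P f S hSm (posterior_nonneg hA m₂ a)
    (integrable_condExp (m := m₂)) (by rw [hint1, hint2, hint3])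
  filter_upwards [this] with ω hω h0
  exact hω h0

end

lemma cross_term {Ω : Type*} {mΩ : MeasurableSpace Ω} {P : Measure Ω} [IsProbabilityMeasure P]
    {m : MeasurableSpace Ω} (hm : m ≤ mΩ) (f u : Ω → ℝ)
    (hf_int : Integrable f P)
    (hu_meas : StronglyMeasurable[m] u)
    (hcond : P[f|m] =ᵐ[P] u)
    (hf0 : ∀ᵐ ω ∂P, 0 ≤ f ω) (hf1 : ∀ᵐ ω ∂P, f ω ≤ 1)
    (hu0 : ∀ᵐ ω ∂P, 0 ≤ u ω) (hu1 : ∀ᵐ ω ∂P, u ω ≤ 1) :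
    Integrable (fun ω => f ω * (-Real.log (u ω))) P ∧
    ∫ ω, f ω * (-Real.log (u ω)) ∂P ≤ ∫ ω, u ω * (-Real.log (u ω)) ∂P := by
  have humΩ : Measurable[mΩ] u := (hu_meas.mono hm).measurable
  -- -log u ≥ 0 a.e.
  have hlog0 : ∀ᵐ ω ∂P, 0 ≤ -Real.log (u ω) := by
    filter_upwards [hu0, hu1] with ω h0 h1
    simp only [neg_nonneg]
    exact Real.log_nonpos h0 h1
  -- the RHS integrand is bounded in [0,1] a.e.
  have hRHS_bdd : ∀ᵐ ω ∂P, 0 ≤ u ω * (-Real.log (u ω)) ∧ u ω * (-Real.log (u ω)) ≤ 1 := by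
    filter_upwards [hu0, hu1, hlog0] with ω h0 h1 hl
    refine ⟨mul_nonneg h0 hl, ?_⟩
    calc u ω * (-Real.log (u ω)) = |u ω * Real.log (u ω)| := by
          rw [← abs_of_nonneg (mul_nonneg h0 hl), mul_neg, abs_neg]
    _ ≤ 1 := xlogx_abs_le h0 h1
  have hRHS_meas : Measurable[mΩ] fun ω => u ω * (-Real.log (u ω)) :=
    humΩ.mul (Real.measurable_log.comp humΩ).neg
  have hRHS_int : Integrable (fun ω => u ω * (-Real.log (u ω))) P := by
    apply Integrable.mono' (integrable_const (1:ℝ)) hRHS_meas.aestronglyMeasurable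
    filter_upwards [hRHS_bdd] with ω hω
    rw [Real.norm_eq_abs, abs_of_nonneg hω.1]
    exact hω.2
  set C := ∫ ω, u ω * (-Real.log (u ω)) ∂P with hC
  have hC0 : 0 ≤ C := integral_nonneg_of_ae <| by filter_upwards [hRHS_bdd] with ω h using h.1
  -- truncations
  set g : ℕ → Ω → ℝ := fun N ω => min (-Real.log (u ω)) N with hg
  have hg_meas : ∀ N, StronglyMeasurable[m] (g N) := fun N =>
    (((Real.measurable_log.comp hu_meas.measurable).neg.min measurable_const)).stronglyMeasurable
  have hg_bdd : ∀ N, ∀ᵐ ω ∂P, 0 ≤ g N ω ∧ g N ω ≤ N := by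
    intro N
    filter_upwards [hlog0] with ω hl
    exact ⟨le_min hl (Nat.cast_nonneg N), min_le_right _ _⟩
  have hgf_int : ∀ N, Integrable (g N * f) P := by
    intro N
    apply Integrable.mono' (integrable_const (N:ℝ))
      (((hg_meas N).mono hm).aestronglyMeasurable.mul hf_int.aestronglyMeasurable)
    filter_upwards [hg_bdd N, hf0, hf1] with ω hgω hf0ω hf1ω
    rw [Pi.mul_apply, Real.norm_eq_abs, abs_of_nonneg (mul_nonneg hgω.1 hf0ω)]
    calc g N ω * f ω ≤ g N ω * 1 := by
          exact mul_le_mul_of_nonneg_left hf1ω hgω.1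
    _ ≤ N := by rw [mul_one]; exact hgω.2
  -- step 1 : ∫ gN * f ≤ C
  have step1 : ∀ N, ∫ ω, g N ω * f ω ∂P ≤ C := by
    intro N
    have hpull := condExp_mul_of_stronglyMeasurable_left (hg_meas N) (hgf_int N) hf_int
    have h1 : ∫ ω, g N ω * f ω ∂P = ∫ ω, (P[g N * f|m]) ω ∂P :=
      (integral_condExp hm).symm
    have h2 : ∫ ω, (P[g N * f|m]) ω ∂P = ∫ ω, g N ω * u ω ∂P := by
      apply integral_congr_ae
      filter_upwards [hpull, hcond] with ω hω hcω
      rw [hω, Pi.mul_apply, hcω]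
    rw [h1, h2]
    apply integral_mono_ae _ hRHS_int
    · filter_upwards [hu0] with ω h0
      calc g N ω * u ω ≤ (-Real.log (u ω)) * u ω :=
            mul_le_mul_of_nonneg_right (min_le_left _ _) h0
      _ = u ω * (-Real.log (u ω)) := mul_comm _ _
    · apply Integrable.mono' (integrable_const (N:ℝ))
        (((hg_meas N).mono hm).aestronglyMeasurable.mul humΩ.aestronglyMeasurable)
      filter_upwards [hg_bdd N, hu0, hu1] with ω hgω h0 h1
      simp only [Pi.mul_apply]
      rw [Real.norm_eq_abs, abs_of_nonneg (mul_nonneg hgω.1 h0)]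
      calc g N ω * u ω ≤ g N ω * 1 := mul_le_mul_of_nonneg_left h1 hgω.1
      _ ≤ N := by rw [mul_one]; exact hgω.2
  -- the target function
  set φ : Ω → ℝ := fun ω => f ω * (-Real.log (u ω)) with hφ
  have hφ_meas : AEStronglyMeasurable[mΩ] φ P :=
    hf_int.aestronglyMeasurable.mul (Real.measurable_log.comp humΩ).neg.aestronglyMeasurable
  have hφ0 : ∀ᵐ ω ∂P, 0 ≤ φ ω := by
    filter_upwards [hf0, hlog0] with ω h0 hl using mul_nonneg h0 hl
  -- lintegral bound via monotone convergence
  have hkey : ∫⁻ ω, ENNReal.ofReal (φ ω) ∂P ≤ ENNReal.ofReal C := by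
    have heq : ∫⁻ ω, ENNReal.ofReal (φ ω) ∂P
        = ∫⁻ ω, ⨆ N : ℕ, ENNReal.ofReal (g N ω * f ω) ∂P := by
      apply lintegral_congr_ae
      filter_upwards [hf0, hlog0] with ω h0 hl
      have : ∀ N : ℕ, g N ω * f ω = f ω * g N ω := fun N => mul_comm _ _
      apply le_antisymm
      · apply le_iSup_of_le ⌈-Real.log (u ω)⌉₊
        rw [this]
        rw [hg]
        simp only []
        rw [min_eq_left (Nat.le_ceil _)]
      · apply iSup_le
        intro N
        apply ENNReal.ofReal_le_ofReal
        rw [this]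
        exact mul_le_mul_of_nonneg_left (min_le_left _ _) h0
    rw [heq]
    rw [lintegral_iSup' (f := fun N ω => ENNReal.ofReal (g N ω * f ω))
      (fun N => (ENNReal.measurable_ofReal.comp_aemeasurable
        ((((hg_meas N).mono hm).measurable.aemeasurable).mul
          hf_int.aestronglyMeasurable.aemeasurable)))
      (by filter_upwards [hf0] with ω h0 N M hNM;
          exact ENNReal.ofReal_le_ofReal (mul_le_mul_of_nonneg_right
            (min_le_min le_rfl (Nat.cast_le.mpr hNM)) h0))]
    apply iSup_le
    intro N
    have hnn : 0 ≤ᵐ[P] fun ω => g N ω * f ω := by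
      filter_upwards [hg_bdd N, hf0] with ω hgω h0 using mul_nonneg hgω.1 h0
    rw [← ofReal_integral_eq_lintegral_ofReal (show Integrable (fun ω => g N ω * f ω) P from hgf_int N) hnn]
    exact ENNReal.ofReal_le_ofReal (step1 N)
  have hφ_int : Integrable φ P := by
    refine ⟨hφ_meas, ?_⟩
    rw [hasFiniteIntegral_iff_norm]
    calc ∫⁻ ω, ENNReal.ofReal ‖φ ω‖ ∂P = ∫⁻ ω, ENNReal.ofReal (φ ω) ∂P := by
          apply lintegral_congr_ae
          filter_upwards [hφ0] with ω h0
          rw [Real.norm_eq_abs, abs_of_nonneg h0]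
    _ ≤ ENNReal.ofReal C := hkey
    _ < ⊤ := ENNReal.ofReal_lt_top
  refine ⟨hφ_int, ?_⟩
  rw [integral_eq_lintegral_of_nonneg_ae hφ0 hφ_meas]
  calc (∫⁻ ω, ENNReal.ofReal (φ ω) ∂P).toReal ≤ (ENNReal.ofReal C).toReal :=
        ENNReal.toReal_mono ENNReal.ofReal_ne_top hkey
  _ = C := ENNReal.toReal_ofReal hC0

lemma posterior_props {Ω : Type*} {mΩ : MeasurableSpace Ω} {P : Measure Ω}
    [IsProbabilityMeasure P] {k : ℕ} {Astar : Ω → Fin k} (hk : 1 ≤ k) (hA : Measurable Astar)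
    {m' : MeasurableSpace Ω} (hm : m' ≤ mΩ) :
    ∀ᵐ ω ∂P, (∀ a, 0 ≤ posterior P Astar m' ω a ∧ posterior P Astar m' ω a ≤ 1) ∧
      ∑ a, posterior P Astar m' ω a = 1 := by
  have h1 : ∀ᵐ ω ∂P, ∀ a, 0 ≤ posterior P Astar m' ω a ∧ posterior P Astar m' ω a ≤ 1 := by
    rw [ae_all_iff]
    intro a
    filter_upwards [posterior_nonneg hA m' a, posterior_le_one hA hm a] with ω p1 p2
    exact ⟨p1, p2⟩
  filter_upwards [h1, posterior_sum_one hk hA hm] with ω w1 w2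
  exact ⟨w1, w2⟩

lemma posterior_coord_meas {Ω : Type*} {mΩ : MeasurableSpace Ω} {P : Measure Ω}
    {k : ℕ} {Astar : Ω → Fin k} {m' : MeasurableSpace Ω} (hm : m' ≤ mΩ) (a : Fin k) :
    Measurable[mΩ] (fun ω => posterior P Astar m' ω a) :=
  ((stronglyMeasurable_condExp (m := m')).mono hm).measurable

lemma xnlogx_int {Ω : Type*} {mΩ : MeasurableSpace Ω} (P : Measure Ω) [IsProbabilityMeasure P]
    (v : Ω → ℝ) (hv : Measurable v) (h0 : ∀ᵐ ω ∂P, 0 ≤ v ω) (h1 : ∀ᵐ ω ∂P, v ω ≤ 1) :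
    Integrable (fun ω => v ω * (-Real.log (v ω))) P := by
  apply Integrable.mono' (integrable_const (1:ℝ))
    (hv.mul (Real.measurable_log.comp hv).neg).aestronglyMeasurable
  filter_upwards [h0, h1] with ω hω0 hω1
  show ‖v ω * -Real.log (v ω)‖ ≤ 1
  have hl : 0 ≤ -Real.log (v ω) := by simpa using Real.log_nonpos hω0 hω1
  rw [Real.norm_eq_abs, abs_of_nonneg (mul_nonneg hω0 hl)]
  calc v ω * -Real.log (v ω) = |v ω * Real.log (v ω)| := by
        rw [← abs_of_nonneg (mul_nonneg hω0 hl), mul_neg, abs_neg]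
  _ ≤ 1 := xlogx_abs_le hω0 hω1

lemma ent_int {Ω : Type*} {mΩ : MeasurableSpace Ω} {P : Measure Ω}
    [IsProbabilityMeasure P] {k : ℕ} {Astar : Ω → Fin k} (hk : 1 ≤ k) (hA : Measurable Astar)
    {m' : MeasurableSpace Ω} (hm : m' ≤ mΩ) :
    Integrable (fun ω => ∑ a, posterior P Astar m' ω a *
      Real.log (posterior P Astar m' ω a)) P := by
  apply Integrable.mono' (integrable_const (k:ℝ))
  · exact (Finset.measurable_sum Finset.univ (fun a _ => (posterior_coord_meas hm a).mul
      (Real.measurable_log.comp (posterior_coord_meas hm a)))).aestronglyMeasurable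
  · filter_upwards [posterior_props hk hA hm] with ω hω
    rw [Real.norm_eq_abs]
    calc |∑ a, posterior P Astar m' ω a * Real.log (posterior P Astar m' ω a)|
        ≤ ∑ a, |posterior P Astar m' ω a * Real.log (posterior P Astar m' ω a)| :=
          Finset.abs_sum_le_sum_abs _ _
    _ ≤ ∑ _a : Fin k, (1:ℝ) :=
          Finset.sum_le_sum fun a _ => xlogx_abs_le (hω.1 a).1 (hω.1 a).2
    _ = k := by simp

lemma step_bound {Ω : Type*} {mΩ : MeasurableSpace Ω} {P : Measure Ω}
    [IsProbabilityMeasure P] {k : ℕ} {Astar : Ω → Fin k} (hk : 1 ≤ k) (hA : Measurable Astar)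
    (𝔉 : Filtration ℕ mΩ) (t : ℕ) :
    Integrable (fun ω => klDiv (posterior P Astar (𝔉 (t+1)) ω)
      (posterior P Astar (𝔉 t) ω)) P ∧
    (∀ᵐ ω ∂P, 0 ≤ klDiv (posterior P Astar (𝔉 (t+1)) ω) (posterior P Astar (𝔉 t) ω)) ∧
    ∫ ω, klDiv (posterior P Astar (𝔉 (t+1)) ω) (posterior P Astar (𝔉 t) ω) ∂P ≤
      (∫ ω, ∑ a, posterior P Astar (𝔉 (t+1)) ω a *
        Real.log (posterior P Astar (𝔉 (t+1)) ω a) ∂P) -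
      (∫ ω, ∑ a, posterior P Astar (𝔉 t) ω a *
        Real.log (posterior P Astar (𝔉 t) ω a) ∂P) := by
  set q₁ := posterior P Astar (𝔉 t) with hq₁
  set q₂ := posterior P Astar (𝔉 (t+1)) with hq₂
  have h12 : 𝔉 t ≤ 𝔉 (t+1) := 𝔉.mono (Nat.le_succ t)
  have hm1 : 𝔉 t ≤ mΩ := 𝔉.le t
  have hm2 : 𝔉 (t+1) ≤ mΩ := 𝔉.le (t+1)
  have habs : ∀ᵐ ω ∂P, ∀ a, q₁ ω a = 0 → q₂ ω a = 0 := by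
    rw [ae_all_iff]
    exact fun a => posterior_absCont hA h12 hm2 a
  -- cross terms
  have hcross : ∀ a : Fin k,
      Integrable (fun ω => q₂ ω a * (-Real.log (q₁ ω a))) P ∧
      ∫ ω, q₂ ω a * (-Real.log (q₁ ω a)) ∂P ≤
        ∫ ω, q₁ ω a * (-Real.log (q₁ ω a)) ∂P := by
    intro a
    refine cross_term hm1 (fun ω => q₂ ω a) (fun ω => q₁ ω a)
      integrable_condExp stronglyMeasurable_condExp
      (condExp_condExp_of_le h12 hm2)
      (posterior_nonneg hA _ a) (posterior_le_one hA hm2 a)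
      (posterior_nonneg hA _ a) (posterior_le_one hA hm1 a)
  -- a.e. decomposition
  have hdecomp : ∀ᵐ ω ∂P,
      klDiv (q₂ ω) (q₁ ω) = (∑ a, q₂ ω a * Real.log (q₂ ω a)) +
        ∑ a, q₂ ω a * (-Real.log (q₁ ω a)) := by
    filter_upwards [habs] with ω hω
    rw [klDiv, ← Finset.sum_add_distrib]
    apply Finset.sum_congr rfl
    intro a _
    by_cases h0 : q₂ ω a = 0
    · simp [h0]
    · have h1 : q₁ ω a ≠ 0 := fun e => h0 (hω a e)
      rw [Real.log_div h0 h1]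
      ring
  have hsum_int : Integrable (fun ω => ∑ a, q₂ ω a * (-Real.log (q₁ ω a))) P :=
    integrable_finset_sum _ fun a _ => (hcross a).1
  have hG_int : Integrable (fun ω => klDiv (q₂ ω) (q₁ ω)) P :=
    Integrable.congr ((ent_int hk hA hm2).add hsum_int)
      (by filter_upwards [hdecomp] with ω h; exact h.symm)
  refine ⟨hG_int, ?_, ?_⟩
  · filter_upwards [posterior_props hk hA hm1, posterior_props hk hA hm2, habs]
      with ω h1 h2 hω
    exact gibbs_aux (q₂ ω) (q₁ ω) (fun a => (h2.1 a).1) (fun a => (h1.1 a).1)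
      hω h2.2 (le_of_eq h1.2)
  · have heq : ∫ ω, klDiv (q₂ ω) (q₁ ω) ∂P =
        (∫ ω, ∑ a, q₂ ω a * Real.log (q₂ ω a) ∂P) +
        ∫ ω, ∑ a, q₂ ω a * (-Real.log (q₁ ω a)) ∂P := by
      rw [← integral_add (ent_int hk hA hm2) hsum_int]
      exact integral_congr_ae hdecomp
    have h2 : ∫ ω, ∑ a, q₂ ω a * (-Real.log (q₁ ω a)) ∂P ≤
        - ∫ ω, ∑ a, q₁ ω a * Real.log (q₁ ω a) ∂P := by
      rw [integral_finset_sum _ fun a _ => (hcross a).1]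
      have : - ∫ ω, ∑ a, q₁ ω a * Real.log (q₁ ω a) ∂P =
          ∑ a, ∫ ω, q₁ ω a * (-Real.log (q₁ ω a)) ∂P := by
        rw [← integral_finset_sum _ fun a _ => xnlogx_int P _ (posterior_coord_meas hm1 a)
          (posterior_nonneg hA _ a) (posterior_le_one hA hm1 a), ← integral_neg]
        apply integral_congr_ae
        filter_upwards with ω
        rw [← Finset.sum_neg_distrib]
        apply Finset.sum_congr rfl
        intro a _
        ring
      rw [this]
      exact Finset.sum_le_sum fun a _ => (hcross a).2
    rw [heq]
    linarith

/-- **Russo–Van Roy information-theoretic regret bound** (posterior-martingale form).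
If the one-step regret is bounded by `√(β E_t[D(P*_{t+1} ‖ P*_t)])`, where `P*_t` is
the posterior distribution of the optimal action `A*` given `𝔉_t` and `D` is the
relative entropy (the Bregman divergence of the unnormalised negentropy, whose
conditional expectation is the conditional information gain about `A*`), then the
total expected regret is at most `√(n β log k)`. -/
theorem russo_van_roy_regret_bound {Ω : Type*} {mΩ : MeasurableSpace Ω}
    {P : Measure Ω} [IsProbabilityMeasure P] {k n : ℕ} (hk : 1 ≤ k)
    (𝔉 : Filtration ℕ mΩ)
    (Astar : Ω → Fin k) (hA : Measurable Astar)
    (Δ : ℕ → Ω → ℝ) (hΔ : ∀ t < n, Integrable (Δ t) P)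
    (β : ℝ) (hβ : 0 ≤ β)
    (hbound : ∀ t < n, ∀ᵐ ω ∂P,
      (P[Δ t | 𝔉 t]) ω ≤
        Real.sqrt (β *
          (P[fun ω' => klDiv (posterior P Astar (𝔉 (t + 1)) ω')
              (posterior P Astar (𝔉 t) ω') | 𝔉 t]) ω)) :
    ∫ ω, (∑ t ∈ Finset.range n, Δ t ω) ∂P ≤ Real.sqrt (n * β * Real.log k) := by
  rcases Nat.eq_zero_or_pos n with hn | hn
  · subst hn
    simp only [Finset.range_zero, Finset.sum_empty, integral_zero, Nat.cast_zero]
    exact Real.sqrt_nonneg _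
  have hlogk : 0 ≤ Real.log k := Real.log_nonneg (by exact_mod_cast hk)
  have hstep := fun t => step_bound (P := P) hk hA 𝔉 t
  set G : ℕ → Ω → ℝ := fun t ω => klDiv (posterior P Astar (𝔉 (t+1)) ω)
    (posterior P Astar (𝔉 t) ω) with hGdef
  set E : ℕ → ℝ := fun s => ∫ ω, ∑ a, posterior P Astar (𝔉 s) ω a *
    Real.log (posterior P Astar (𝔉 s) ω a) ∂P with hEdef
  have hEbounds : ∀ s : ℕ, -Real.log k ≤ E s ∧ E s ≤ 0 := by
    intro s
    constructor
    · calc -Real.log k = ∫ _ω, (-Real.log k : ℝ) ∂P := by simp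
      _ ≤ E s := by
          apply integral_mono_ae (integrable_const _) (ent_int hk hA (𝔉.le s))
          filter_upwards [posterior_props hk hA (𝔉.le s)] with ω hω
          exact entropy_ge hk _ (fun a => (hω.1 a).1) hω.2
    · apply integral_nonpos_of_ae
      filter_upwards [posterior_props hk hA (𝔉.le s)] with ω hω
      exact entropy_le _ (fun a => (hω.1 a).1) (fun a => (hω.1 a).2)
  have hS_le : ∑ t ∈ Finset.range n, ∫ ω, G t ω ∂P ≤ Real.log k := by
    calc ∑ t ∈ Finset.range n, ∫ ω, G t ω ∂P
        ≤ ∑ t ∈ Finset.range n, (E (t+1) - E t) :=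
          Finset.sum_le_sum fun t _ => (hstep t).2.2
    _ = E n - E 0 := Finset.sum_range_sub E n
    _ ≤ 0 - (-Real.log k) := sub_le_sub (hEbounds n).2 (hEbounds 0).1
    _ = Real.log k := by ring
  have hmain : ∀ γ : ℝ, 0 < γ →
      ∫ ω, (∑ t ∈ Finset.range n, Δ t ω) ∂P ≤
        β * Real.log k / (2 * γ) + n * γ / 2 := by
    intro γ hγ
    have hX : ∫ ω, (∑ t ∈ Finset.range n, Δ t ω) ∂P
        = ∑ t ∈ Finset.range n, ∫ ω, Δ t ω ∂P :=
      integral_finset_sum _ fun t ht => hΔ t (Finset.mem_range.mp ht)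
    have hper : ∀ t ∈ Finset.range n,
        ∫ ω, Δ t ω ∂P ≤ β / (2 * γ) * ∫ ω, G t ω ∂P + γ / 2 := by
      intro t ht
      have ht' := Finset.mem_range.mp ht
      have h1 : ∫ ω, Δ t ω ∂P = ∫ ω, (P[Δ t|𝔉 t]) ω ∂P :=
        (integral_condExp (𝔉.le t)).symm
      have hc0 : ∀ᵐ ω ∂P, 0 ≤ (P[G t|𝔉 t]) ω := condExp_nonneg (hstep t).2.1
      have h2 : ∫ ω, (P[Δ t|𝔉 t]) ω ∂P ≤
          ∫ ω, (β / (2 * γ) * (P[G t|𝔉 t]) ω + γ / 2) ∂P := by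
        apply integral_mono_ae integrable_condExp
          ((integrable_condExp.const_mul _).add (integrable_const _))
        filter_upwards [hbound t ht', hc0] with ω hb hc
        calc (P[Δ t|𝔉 t]) ω ≤ Real.sqrt (β * (P[G t|𝔉 t]) ω) := hb
        _ ≤ β * (P[G t|𝔉 t]) ω / (2 * γ) + γ / 2 :=
              sqrt_le_div_add (mul_nonneg hβ hc) hγ
        _ = β / (2 * γ) * (P[G t|𝔉 t]) ω + γ / 2 := by ring
      have h3 : ∫ ω, (β / (2 * γ) * (P[G t|𝔉 t]) ω + γ / 2) ∂P =
          β / (2 * γ) * ∫ ω, G t ω ∂P + γ / 2 := by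
        rw [integral_add (integrable_condExp.const_mul _) (integrable_const _),
          integral_const_mul, integral_condExp (𝔉.le t)]
        simp
      rw [h1]
      rw [h3] at h2
      exact h2
    calc ∫ ω, (∑ t ∈ Finset.range n, Δ t ω) ∂P
        ≤ ∑ t ∈ Finset.range n, (β / (2 * γ) * ∫ ω, G t ω ∂P + γ / 2) := by
          rw [hX]; exact Finset.sum_le_sum hper
    _ = β / (2 * γ) * (∑ t ∈ Finset.range n, ∫ ω, G t ω ∂P) + n * γ / 2 := by
          rw [Finset.sum_add_distrib, ← Finset.mul_sum]
          simp [Finset.card_range]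
          ring
    _ ≤ β / (2 * γ) * Real.log k + n * γ / 2 := by
          have : 0 ≤ β / (2 * γ) := by positivity
          nlinarith [hS_le]
    _ = β * Real.log k / (2 * γ) + n * γ / 2 := by ring
  have := arith_final hn (mul_nonneg hβ hlogk) hmain
  rw [mul_assoc]
  exact this

end
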